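/- arXiv:1506.02195 — 2 statements merged into one kernel-verified Lean document; each statement's English description precedes it below -/
import Mathlib

section
/- (Lemma 3.1) As ρ → ∞, Δ(ρ) = Σ_{ξ=1}^m ρ^{μ₁+2τ_ξ}(a^∞_ξ + O(ρ^{−1})), where a^∞_ξ = Σ_{s∈I_ξ} σ_{s2} b^∞_{s2} ∏_{j≠s} σ_j b^∞_{j1} and μ₁ := Σ_{j=1}^p μ_{j1}; and as ρ → 0, Δ(ρ) = ρ^{μ₁}(d⁰ + o(1)) with d⁰ = Σ_{s=1}^p (σ_{s1} b⁰_{s1} + σ_{s2} b⁰_{s2}) ∏_{j≠s} σ_j b⁰_{j1}. Moreover the coefficients a^∞_ξ depend only on the numbers ν_k and the coefficients σ_k, σ_{k1}, σ_{k2}, and not on the potentials q_k. -/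
open Filter Complex Topology MeasureTheory Asymptotics Matrix

noncomputable section

/-- `y` solves the equation `-y'' + (ν₀/x² + q x) y = λ y` on `(0,∞)`. -/
def SolvesEq (ν₀ : ℂ) (q : ℝ → ℂ) (lam : ℂ) (y : ℝ → ℂ) : Prop :=
  ∀ x : ℝ, 0 < x → - deriv (deriv y) x + (ν₀ / (x : ℂ) ^ 2 + q x) * y x = lam * y x

/-- The Jost normalization: `y^{(ξ)}(x) = e^{iρx}((iρ)^ξ + o(1))` as `x → ∞`, `ξ = 0,1`. -/
def JostAt (ρ : ℂ) (y : ℝ → ℂ) : Prop :=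
  Tendsto (fun x : ℝ => y x * Complex.exp (-(Complex.I * ρ * x))) atTop (𝓝 1) ∧
  Tendsto (fun x : ℝ => deriv y x * Complex.exp (-(Complex.I * ρ * x))) atTop
    (𝓝 (Complex.I * ρ))

/-- The Wronskian `⟨y,z⟩ = y z' - y' z` at the point `x`. -/
def Wr (y z : ℝ → ℂ) (x : ℝ) : ℂ := y x * deriv z x - deriv y x * z x

/-- Condition (2.2): `∫₀¹ |x^{1−2ν} q(x)| dx + ∫₁^∞ |x q(x)| dx < ∞`. -/
def Cond22 (ν : ℂ) (q : ℝ → ℂ) : Prop :=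
  MeasureTheory.IntegrableOn (fun x : ℝ => x ^ (1 - 2 * ν.re) * ‖q x‖) (Set.Ioc 0 1) ∧
  MeasureTheory.IntegrableOn (fun x : ℝ => x * ‖q x‖) (Set.Ioi 1)

/-- The filter `ρ → ∞` within the closed upper half-plane. -/
def atInfUHP : Filter ℂ := Bornology.cobounded ℂ ⊓ Filter.principal {ρ : ℂ | 0 ≤ ρ.im}

/-- The filter `ρ → 0` within the closed upper half-plane (excluding `0`). -/
def nhdsZeroUHP : Filter ℂ := nhdsWithin 0 {ρ : ℂ | 0 ≤ ρ.im ∧ ρ ≠ 0}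


section AuxLemmas

open Asymptotics

lemma cpow_sum' {ι : Type*} (s : Finset ι) {z : ℂ} (hz : z ≠ 0) (f : ι → ℂ) :
    z ^ (∑ i ∈ s, f i) = ∏ i ∈ s, z ^ f i := by
  classical
  induction s using Finset.induction_on with
  | empty => simp
  | insert _ _ h ih => rw [Finset.sum_insert h, Complex.cpow_add _ _ hz, ih, Finset.prod_insert h]

lemma atInf_one_le : ∀ᶠ ρ : ℂ in atInfUHP, 1 ≤ ‖ρ‖ :=
  Filter.Eventually.filter_mono inf_le_left (eventually_cobounded_le_norm 1)

lemma atInf_ne_zero : ∀ᶠ ρ : ℂ in atInfUHP, ρ ≠ 0 := by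
  filter_upwards [atInf_one_le] with ρ h
  intro h0; rw [h0, norm_zero] at h; linarith

lemma inv_isBigO_one : (fun ρ : ℂ => ρ⁻¹) =O[atInfUHP] (fun _ => (1:ℂ)) := by
  rw [Asymptotics.isBigO_iff]
  refine ⟨1, ?_⟩
  filter_upwards [atInf_one_le] with ρ h
  simp only [norm_inv, norm_one, mul_one]
  rw [inv_le_one_iff₀]; right; exact h

lemma cpow_isBigO_inv {w : ℂ} (hw : w.re ≤ -1) :
    (fun ρ : ℂ => ρ ^ w) =O[atInfUHP] fun ρ : ℂ => ρ⁻¹ := by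
  rw [Asymptotics.isBigO_iff]
  refine ⟨Real.exp (Real.pi * |w.im|), ?_⟩
  filter_upwards [atInf_one_le, atInf_ne_zero] with ρ h1 h0
  have habs : ‖ρ ^ w‖ = ‖ρ‖ ^ w.re / Real.exp (Complex.arg ρ * w.im) :=
    Complex.norm_cpow_of_ne_zero h0 w
  have hr : ‖ρ‖ ^ w.re ≤ ‖ρ‖ ^ (-1 : ℝ) :=
    Real.rpow_le_rpow_of_exponent_le h1 hw
  have he : Real.exp (-(Complex.arg ρ * w.im)) ≤ Real.exp (Real.pi * |w.im|) := by
    apply Real.exp_le_exp.2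
    calc -(Complex.arg ρ * w.im) ≤ |Complex.arg ρ * w.im| := neg_le_abs _
      _ = |Complex.arg ρ| * |w.im| := abs_mul _ _
      _ ≤ Real.pi * |w.im| := by
          exact mul_le_mul_of_nonneg_right (Complex.abs_arg_le_pi ρ) (abs_nonneg _)
  simp only [norm_inv]
  rw [habs, div_eq_mul_inv, ← Real.exp_neg]
  calc ‖ρ‖ ^ w.re * Real.exp (-(Complex.arg ρ * w.im))
      ≤ ‖ρ‖ ^ (-1:ℝ) * Real.exp (Real.pi * |w.im|) := by
        exact mul_le_mul hr he (Real.exp_pos _).le (Real.rpow_nonneg (norm_nonneg _) _)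
    _ = Real.exp (Real.pi * |w.im|) * ‖ρ‖⁻¹ := by
        rw [Real.rpow_neg_one]; ring

lemma prod_sub_isBigO {ι : Type*} {l : Filter ℂ} {u : ℂ → ℂ} (hu : u =O[l] (fun _ => (1:ℂ)))
    (s : Finset ι) (F : ι → ℂ → ℂ) (c : ι → ℂ)
    (h : ∀ i ∈ s, (fun ρ => F i ρ - c i) =O[l] u) :
    (fun ρ => (∏ i ∈ s, F i ρ) - ∏ i ∈ s, c i) =O[l] u := by
  classical
  induction s using Finset.induction_on with
  | empty => simpa using (Asymptotics.isBigO_zero u l)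
  | @insert a s ha ih =>
    have hs : ∀ i ∈ s, (fun ρ => F i ρ - c i) =O[l] u := fun i hi =>
      h i (Finset.mem_insert_of_mem hi)
    have hps := ih hs
    have hPF : (fun ρ => ∏ i ∈ s, F i ρ) =O[l] fun _ => (1:ℂ) := by
      have h3 := (hps.trans hu).add (Asymptotics.isBigO_const_const (∏ i ∈ s, c i) one_ne_zero l)
      have h2 := h3.congr_left (fun ρ => by ring)
      simpa using h2
    have h1 : (fun ρ => (F a ρ - c a) * ∏ i ∈ s, F i ρ) =O[l] u := by
      have := (h a (Finset.mem_insert_self a s)).mul hPF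
      simpa using this
    have h2 : (fun ρ => c a * ((∏ i ∈ s, F i ρ) - ∏ i ∈ s, c i)) =O[l] u :=
      hps.const_mul_left _
    have := h1.add h2
    apply this.congr_left
    intro ρ
    rw [Finset.prod_insert ha, Finset.prod_insert ha]; ring

end AuxLemmas

/-- The star-graph problem `L` of the paper: `p` rays, on ray `R_j` the equation
`−y'' + (ν_{j0}/x² + q_j(x))y = ρ²y` with `ν_{j0} = ν_j² − 1/4`, `Re ν_j > 1/2`,
`ν_j ∉ ℕ`, Condition ν, potentials satisfying (2.2), matching coefficients
`σ_j ≠ 0`, `σ_{j2} ≠ 0`, the solutions `S_{j1}, S_{j2}` (with unit Wronskian), the Jost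
solutions `f_j`, and the Stokes multipliers `b_{j1}, b_{j2}` together with their
Lemma 2.1 asymptotic constants `b^∞_{j1}, b^∞_{j2} ≠ 0` and `b⁰_{j1}, b⁰_{j2}`. -/
structure GraphProblem (p : ℕ) where
  ν : Fin p → ℂ
  σ : Fin p → ℂ
  σ1 : Fin p → ℂ
  σ2 : Fin p → ℂ
  q : Fin p → ℝ → ℂ
  S1 : Fin p → ℝ → ℂ → ℂ
  S2 : Fin p → ℝ → ℂ → ℂ
  f : Fin p → ℝ → ℂ → ℂ
  b1 : Fin p → ℂ → ℂ
  b2 : Fin p → ℂ → ℂ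
  b1inf : Fin p → ℂ
  b2inf : Fin p → ℂ
  b10 : Fin p → ℂ
  b20 : Fin p → ℂ
  hν : ∀ j, 1 / 2 < (ν j).re
  hνnat : ∀ j (n : ℕ), ν j ≠ (n : ℂ)
  hνcond : ∀ j l, ν j ≠ ν l → (ν j).re ≠ (ν l).re
  hσ : ∀ j, σ j ≠ 0
  hσ2 : ∀ j, σ2 j ≠ 0
  hq : ∀ j, Cond22 (ν j) (q j)
  hS1 : ∀ j lam, SolvesEq ((ν j) ^ 2 - 1 / 4) (q j) lam (fun x => S1 j x lam)
  hS2 : ∀ j lam, SolvesEq ((ν j) ^ 2 - 1 / 4) (q j) lam (fun x => S2 j x lam)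
  hWrS : ∀ j lam (x : ℝ), 0 < x →
    Wr (fun t => S1 j t lam) (fun t => S2 j t lam) x = 1
  hf : ∀ j (ρ : ℂ), ρ ≠ 0 → 0 ≤ ρ.im →
    SolvesEq ((ν j) ^ 2 - 1 / 4) (q j) (ρ ^ 2) (fun x => f j x ρ) ∧
      JostAt ρ (fun x => f j x ρ)
  hfan : ∀ j (x : ℝ), 0 < x → DifferentiableOn ℂ (fun ρ => f j x ρ) {ρ : ℂ | 0 < ρ.im}
  hb : ∀ j (ρ : ℂ), ρ ≠ 0 → 0 ≤ ρ.im → ∀ x : ℝ, 0 < x →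
    f j x ρ = b1 j ρ * S1 j x (ρ ^ 2) + b2 j ρ * S2 j x (ρ ^ 2)
  hb1inf : ∀ j, (fun ρ : ℂ => b1 j ρ - ρ ^ ((1 : ℂ) / 2 - ν j) * b1inf j)
      =O[atInfUHP] fun ρ : ℂ => ρ ^ ((1 : ℂ) / 2 - ν j) / ρ
  hb2inf : ∀ j, (fun ρ : ℂ => b2 j ρ - ρ ^ ((1 : ℂ) / 2 + ν j) * b2inf j)
      =O[atInfUHP] fun ρ : ℂ => ρ ^ ((1 : ℂ) / 2 + ν j) / ρ
  hb1inf0 : ∀ j, b1inf j ≠ 0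
  hb2inf0 : ∀ j, b2inf j ≠ 0
  hb10 : ∀ j, Tendsto (fun ρ : ℂ => b1 j ρ / ρ ^ ((1 : ℂ) / 2 - ν j)) nhdsZeroUHP
    (𝓝 (b10 j))
  hb20 : ∀ j, Tendsto (fun ρ : ℂ => b2 j ρ / ρ ^ ((1 : ℂ) / 2 - ν j)) nhdsZeroUHP
    (𝓝 (b20 j))

namespace GraphProblem

variable {p : ℕ}

/-- The characteristic function (3.5):
`Δ(ρ) = Σ_s (σ_{s1} b_{s1}(ρ) + σ_{s2} b_{s2}(ρ)) ∏_{j≠s} σ_j b_{j1}(ρ)`. -/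
def Delta (G : GraphProblem p) (ρ : ℂ) : ℂ :=
  ∑ s : Fin p, (G.σ1 s * G.b1 s ρ + G.σ2 s * G.b2 s ρ) *
    ∏ j ∈ Finset.univ.erase s, (G.σ j * G.b1 j ρ)

/-- `Δ_k(ρ) = σ_k² ∏_{j≠k} σ_j b_{j1}(ρ)` (formula (3.6)). -/
def Deltak (G : GraphProblem p) (k : Fin p) (ρ : ℂ) : ℂ :=
  (G.σ k) ^ 2 * ∏ j ∈ Finset.univ.erase k, (G.σ j * G.b1 j ρ)

/-- `d⁰ = Σ_s (σ_{s1} b⁰_{s1} + σ_{s2} b⁰_{s2}) ∏_{j≠s} σ_j b⁰_{j1}` (Lemma 3.1). -/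
def d0 (G : GraphProblem p) : ℂ :=
  ∑ s : Fin p, (G.σ1 s * G.b10 s + G.σ2 s * G.b20 s) *
    ∏ j ∈ Finset.univ.erase s, (G.σ j * G.b10 j)

open scoped Classical in
/-- `a^∞₁ = Σ_{s ∈ I₁} σ_{s2} b^∞_{s2} ∏_{j≠s} σ_j b^∞_{j1}`, where `I₁` is the group of
rays whose `ν_j` has the largest real part. -/
def aInf1 (G : GraphProblem p) : ℂ :=
  ∑ s : Fin p, if (∀ l, (G.ν l).re ≤ (G.ν s).re) then
    G.σ2 s * G.b2inf s * ∏ j ∈ Finset.univ.erase s, (G.σ j * G.b1inf j) else 0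

/-- Condition G: each `b_{k1}(ρ)Δ(ρ)` has no real zeros (except possibly `ρ = 0`) and no
multiple zeros. -/
def CondG (G : GraphProblem p) : Prop :=
  ∀ k : Fin p, (∀ ρ : ℝ, ρ ≠ 0 → G.b1 k ρ * G.Delta ρ ≠ 0) ∧
    ∀ ρ : ℂ, 0 < ρ.im → G.b1 k ρ * G.Delta ρ = 0 →
      deriv (fun z => G.b1 k z * G.Delta z) ρ ≠ 0

/-- Condition R₀: `b⁰_{j1} ≠ 0` for all `j`, and `d⁰ ≠ 0`. -/
def CondR0 (G : GraphProblem p) : Prop := (∀ j, G.b10 j ≠ 0) ∧ G.d0 ≠ 0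

/-- Condition R∞: `a^∞₁ ≠ 0`. -/
def CondRinf (G : GraphProblem p) : Prop := G.aInf1 ≠ 0

end GraphProblem

/-- The Weyl-type solutions `ψ_k = {ψ_{kj}}` of the graph problem, in the form (3.3):
`ψ_{kj} = γ_{kj} f_j` for `j ≠ k`, `ψ_{kk} = γ_{kk} f_k + (2iρ/b_{k1}) S_{k2}`, where the
coefficients `γ_{kj}, β_k` solve the linear system (3.4) and `γ_{kk}` is given by the
Cramer formula (3.6). -/
structure WeylData {p : ℕ} (G : GraphProblem p) where
  ψ : Fin p → Fin p → ℝ → ℂ → ℂ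
  γ : Fin p → Fin p → ℂ → ℂ
  β : Fin p → ℂ → ℂ
  hψj : ∀ k j, j ≠ k → ∀ (x : ℝ) (ρ : ℂ), ψ k j x ρ = γ k j ρ * G.f j x ρ
  hψk : ∀ k (x : ℝ) (ρ : ℂ),
    ψ k k x ρ = γ k k ρ * G.f k x ρ + (2 * Complex.I * ρ / G.b1 k ρ) * G.S2 k x (ρ ^ 2)
  hsys1 : ∀ k j (ρ : ℂ), ρ ≠ 0 → 0 ≤ ρ.im → G.b1 k ρ * G.Delta ρ ≠ 0 →
    G.σ j * G.b1 j ρ * γ k j ρ + β k ρ = 0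
  hsys2 : ∀ k (ρ : ℂ), ρ ≠ 0 → 0 ≤ ρ.im → G.b1 k ρ * G.Delta ρ ≠ 0 →
    ∑ j, (G.σ1 j * G.b1 j ρ + G.σ2 j * G.b2 j ρ) * γ k j ρ
      = - G.σ2 k * (2 * Complex.I * ρ / G.b1 k ρ)
  hγkk : ∀ k (ρ : ℂ),
    γ k k ρ = (2 * Complex.I * ρ / G.b1 k ρ) * (G.Deltak k ρ / G.Delta ρ)

/-- `h` has no analytic extension to a full neighbourhood of `ρ₀` (i.e. `ρ₀` is a
non-removable singularity). -/
def NotExtendable (h : ℂ → ℂ) (ρ₀ : ℂ) : Prop :=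
  ¬ ∃ g : ℂ → ℂ, AnalyticAt ℂ g ρ₀ ∧ ∀ᶠ ρ in 𝓝[≠] ρ₀, g ρ = h ρ

/-- `Z_k^+`: the set of poles of `ψ_{kk}(x,·)` in the open upper half-plane. -/
def ZplusSet {p : ℕ} {G : GraphProblem p} (W : WeylData G) (k : Fin p) : Set ℂ :=
  {ρ₀ : ℂ | 0 < ρ₀.im ∧ ∃ x : ℝ, 0 < x ∧ NotExtendable (fun ρ => W.ψ k k x ρ) ρ₀}

/-- The matrix `Ψ(x,ρ)` of (4.1): columns `(ψ_{kk}, ψ'_{kk})ᵀ` and `(f_k, f'_k)ᵀ` for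
`Im ρ > 0`, and `Ψ(x,ρ) := Ψ(x,−ρ)` for `Im ρ < 0`. -/
def PsiM {p : ℕ} {G : GraphProblem p} (W : WeylData G) (k : Fin p) (x : ℝ) (ρ : ℂ) :
    Matrix (Fin 2) (Fin 2) ℂ :=
  let ρ' := if 0 ≤ ρ.im then ρ else -ρ
  !![W.ψ k k x ρ', G.f k x ρ';
     deriv (fun t => W.ψ k k t ρ') x, deriv (fun t => G.f k t ρ') x]

/-- `μ₁ := Σ_{j=1}^p μ_{j1} = Σ_j (1/2 − ν_j)`. -/
def muSum {p : ℕ} (G : GraphProblem p) : ℂ := ∑ j : Fin p, ((1 : ℂ) / 2 - G.ν j)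

/-- `a^∞_ξ = Σ_{s∈I_ξ} σ_{s2} b^∞_{s2} ∏_{j≠s} σ_j b^∞_{j1}` (Lemma 3.1). -/
def aInfCoeff {p m : ℕ} (G : GraphProblem p) (I : Fin m → Finset (Fin p)) (ξ : Fin m) : ℂ :=
  ∑ s ∈ I ξ, G.σ2 s * G.b2inf s * ∏ j ∈ Finset.univ.erase s, (G.σ j * G.b1inf j)

/-- Lemma 3.1: as `ρ → ∞`,
`Δ(ρ) = Σ_{ξ=1}^m ρ^{μ₁+2τ_ξ}(a^∞_ξ + O(ρ^{−1}))`; as `ρ → 0`, `Δ(ρ) = ρ^{μ₁}(d⁰ + o(1))`.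
Moreover the coefficients `a^∞_ξ` depend only on the numbers `ν_k` and the coefficients
`σ_k, σ_{k1}, σ_{k2}`, and not on the potentials `q_k`. -/
theorem stmt6 (p m : ℕ) (G : GraphProblem p)
    (I : Fin m → Finset (Fin p)) (τ : Fin m → ℂ)
    (hcover : ∀ j : Fin p, ∃! ξ : Fin m, j ∈ I ξ)
    (hne : ∀ ξ, (I ξ).Nonempty)
    (hτ : ∀ ξ, ∀ j ∈ I ξ, G.ν j = τ ξ)
    (hmono : ∀ ξ η : Fin m, ξ < η → (τ η).re < (τ ξ).re)
    -- the Lemma 2.1 constants `b^∞` are universal functions of `ν` alone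
    (B1 B2 : ℂ → ℂ)
    (hB : ∀ j, G.b1inf j = B1 (G.ν j) ∧ G.b2inf j = B2 (G.ν j)) :
    (∃ E : Fin m → ℂ → ℂ,
      (∀ ξ, (E ξ) =O[atInfUHP] fun ρ : ℂ => ρ⁻¹) ∧
      ∀ ρ : ℂ, ρ ≠ 0 → 0 ≤ ρ.im →
        G.Delta ρ = ∑ ξ : Fin m, ρ ^ (muSum G + 2 * τ ξ) * (aInfCoeff G I ξ + E ξ ρ)) ∧
    Tendsto (fun ρ : ℂ => G.Delta ρ / ρ ^ (muSum G)) nhdsZeroUHP (𝓝 G.d0) ∧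
    (∀ G' : GraphProblem p, G'.ν = G.ν → G'.σ = G.σ → G'.σ1 = G.σ1 → G'.σ2 = G.σ2 →
      (∀ j, G'.b1inf j = B1 (G'.ν j) ∧ G'.b2inf j = B2 (G'.ν j)) →
      ∀ ξ, aInfCoeff G' I ξ = aInfCoeff G I ξ) := by
  classical
  have hcne : ∀ (ρ : ℂ), ρ ≠ 0 → ∀ w : ℂ, ρ ^ w ≠ 0 := fun ρ h w => by
    simp [Complex.cpow_eq_zero_iff, h]
  -- partition of the sum over rays into groups
  have hd : ((Finset.univ : Finset (Fin m)) : Set (Fin m)).PairwiseDisjoint I := by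
    intro ξ _ η _ hne'
    rw [Function.onFun, Finset.disjoint_left]
    intro j hjξ hjη
    obtain ⟨ζ, _, huniq⟩ := hcover j
    exact hne' ((huniq ξ hjξ).trans (huniq η hjη).symm)
  have hpart : ∀ g : Fin p → ℂ, ∑ s : Fin p, g s = ∑ ξ : Fin m, ∑ s ∈ I ξ, g s := by
    intro g
    rw [← Finset.sum_biUnion hd]
    apply Finset.sum_congr _ (fun _ _ => rfl)
    ext j
    simp only [Finset.mem_biUnion, Finset.mem_univ, true_and, true_iff]
    exact ⟨(hcover j).choose, (hcover j).choose_spec.1⟩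

  -- the ratio functions and their asymptotics
  have hfac : ∀ (a : ℂ) (f : ℂ → ℂ) (c : ℂ),
      ((fun ρ => f ρ - c) =O[atInfUHP] (fun ρ : ℂ => ρ⁻¹)) →
      (fun ρ => a * f ρ - a * c) =O[atInfUHP] (fun ρ : ℂ => ρ⁻¹) := fun a f c h =>
    (h.const_mul_left a).congr_left (fun ρ => by ring)
  have hO1 : ∀ (f : ℂ → ℂ) (c : ℂ),
      ((fun ρ => f ρ - c) =O[atInfUHP] (fun ρ : ℂ => ρ⁻¹)) →
      f =O[atInfUHP] (fun _ => (1:ℂ)) := by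
    intro f c h
    have h3 := (h.trans inv_isBigO_one).add (Asymptotics.isBigO_const_const c one_ne_zero _)
    have h2 := h3.congr_left (fun ρ => by ring)
    simpa using h2
  have hr1 : ∀ j, (fun ρ : ℂ => G.b1 j ρ / ρ ^ ((1:ℂ)/2 - G.ν j) - G.b1inf j)
      =O[atInfUHP] fun ρ : ℂ => ρ⁻¹ := by
    intro j
    have h := (G.hb1inf j).mul
      (Asymptotics.isBigO_refl (fun ρ : ℂ => (ρ ^ ((1:ℂ)/2 - G.ν j))⁻¹) atInfUHP)
    apply h.congr' ?_ ?_
    · filter_upwards [atInf_ne_zero] with ρ h0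
      have hp : ρ ^ ((1:ℂ)/2 - G.ν j) ≠ 0 := hcne ρ h0 _
      rw [sub_mul, ← div_eq_mul_inv, mul_comm (ρ ^ ((1:ℂ)/2 - G.ν j)) (G.b1inf j),
        mul_inv_cancel_right₀ hp]
    · filter_upwards [atInf_ne_zero] with ρ h0
      have hp : ρ ^ ((1:ℂ)/2 - G.ν j) ≠ 0 := hcne ρ h0 _
      rw [div_mul_eq_mul_div, mul_inv_cancel₀ hp, one_div]
  have hr2 : ∀ j, (fun ρ : ℂ => G.b2 j ρ / ρ ^ ((1:ℂ)/2 + G.ν j) - G.b2inf j)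
      =O[atInfUHP] fun ρ : ℂ => ρ⁻¹ := by
    intro j
    have h := (G.hb2inf j).mul
      (Asymptotics.isBigO_refl (fun ρ : ℂ => (ρ ^ ((1:ℂ)/2 + G.ν j))⁻¹) atInfUHP)
    apply h.congr' ?_ ?_
    · filter_upwards [atInf_ne_zero] with ρ h0
      have hp : ρ ^ ((1:ℂ)/2 + G.ν j) ≠ 0 := hcne ρ h0 _
      rw [sub_mul, ← div_eq_mul_inv, mul_comm (ρ ^ ((1:ℂ)/2 + G.ν j)) (G.b2inf j),
        mul_inv_cancel_right₀ hp]
    · filter_upwards [atInf_ne_zero] with ρ h0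
      have hp : ρ ^ ((1:ℂ)/2 + G.ν j) ≠ 0 := hcne ρ h0 _
      rw [div_mul_eq_mul_div, mul_inv_cancel₀ hp, one_div]
  -- product of ratios vs product of raw Stokes multipliers
  have hprod : ∀ (ρ : ℂ), ρ ≠ 0 → ∀ s : Fin p,
      ∏ j ∈ Finset.univ.erase s, (G.σ j * (G.b1 j ρ / ρ ^ ((1:ℂ)/2 - G.ν j)))
        = (∏ j ∈ Finset.univ.erase s, (G.σ j * G.b1 j ρ))
          / ρ ^ (∑ j ∈ Finset.univ.erase s, ((1:ℂ)/2 - G.ν j)) := by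
    intro ρ hρ s
    rw [cpow_sum' _ hρ, ← Finset.prod_div_distrib]
    exact Finset.prod_congr rfl fun j _ => by rw [mul_div_assoc]
  refine ⟨⟨fun ξ ρ => (∑ s ∈ I ξ, (G.σ1 s * G.b1 s ρ + G.σ2 s * G.b2 s ρ) *
      ∏ j ∈ Finset.univ.erase s, (G.σ j * G.b1 j ρ)) / ρ ^ (muSum G + 2 * τ ξ)
      - aInfCoeff G I ξ, ?_, ?_⟩, ?_, ?_⟩
  · -- the big-O estimate
    intro ξ
    obtain ⟨s₀, hs₀⟩ := hne ξ
    have hτξ : (1:ℝ)/2 < (τ ξ).re := by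
      rw [← hτ ξ s₀ hs₀]; exact G.hν s₀
    set A : ℂ → ℂ := fun ρ => ∑ s ∈ I ξ,
      (G.σ2 s * (G.b2 s ρ / ρ ^ ((1:ℂ)/2 + G.ν s)) *
        ∏ j ∈ Finset.univ.erase s, (G.σ j * (G.b1 j ρ / ρ ^ ((1:ℂ)/2 - G.ν j)))
      - G.σ2 s * G.b2inf s * ∏ j ∈ Finset.univ.erase s, (G.σ j * G.b1inf j)) with hA
    set Bf : ℂ → ℂ := fun ρ => ∑ s ∈ I ξ,
      G.σ1 s * (G.b1 s ρ / ρ ^ ((1:ℂ)/2 - G.ν s)) *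
        ∏ j ∈ Finset.univ.erase s, (G.σ j * (G.b1 j ρ / ρ ^ ((1:ℂ)/2 - G.ν j))) with hBf
    have heq : (fun ρ : ℂ => (∑ s ∈ I ξ, (G.σ1 s * G.b1 s ρ + G.σ2 s * G.b2 s ρ) *
          ∏ j ∈ Finset.univ.erase s, (G.σ j * G.b1 j ρ)) / ρ ^ (muSum G + 2 * τ ξ)
          - aInfCoeff G I ξ)
        =ᶠ[atInfUHP] fun ρ : ℂ => A ρ + ρ ^ (-(2 * τ ξ)) * Bf ρ := by
      filter_upwards [atInf_ne_zero] with ρ hρ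
      rw [hA, hBf]
      simp only
      rw [Finset.sum_div, aInfCoeff, ← Finset.sum_sub_distrib, Finset.mul_sum,
        ← Finset.sum_add_distrib]
      apply Finset.sum_congr rfl
      intro s hs
      have hνs : G.ν s = τ ξ := hτ ξ s hs
      have core : (G.σ1 s * G.b1 s ρ + G.σ2 s * G.b2 s ρ) *
          (∏ j ∈ Finset.univ.erase s, (G.σ j * G.b1 j ρ)) / ρ ^ (muSum G + 2 * τ ξ)
          = G.σ2 s * (G.b2 s ρ / ρ ^ ((1:ℂ)/2 + G.ν s)) *
            ∏ j ∈ Finset.univ.erase s, (G.σ j * (G.b1 j ρ / ρ ^ ((1:ℂ)/2 - G.ν j)))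
          + ρ ^ (-(2 * τ ξ)) * (G.σ1 s * (G.b1 s ρ / ρ ^ ((1:ℂ)/2 - G.ν s)) *
            ∏ j ∈ Finset.univ.erase s, (G.σ j * (G.b1 j ρ / ρ ^ ((1:ℂ)/2 - G.ν j)))) := by
        rw [hprod ρ hρ s, Complex.cpow_neg]
        have hQ : ρ ^ (∑ j ∈ Finset.univ.erase s, ((1:ℂ)/2 - G.ν j)) ≠ 0 := hcne ρ hρ _
        have hps : ρ ^ ((1:ℂ)/2 - G.ν s) ≠ 0 := hcne ρ hρ _
        have hp2 : ρ ^ (2 * τ ξ) ≠ 0 := hcne ρ hρ _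
        have he1 : ρ ^ (muSum G + 2 * τ ξ) = ρ ^ (2 * τ ξ) *
            (ρ ^ ((1:ℂ)/2 - G.ν s) * ρ ^ (∑ j ∈ Finset.univ.erase s, ((1:ℂ)/2 - G.ν j))) := by
          rw [← Complex.cpow_add _ _ hρ, ← Complex.cpow_add _ _ hρ]
          congr 1
          rw [muSum, ← Finset.add_sum_erase _ _ (Finset.mem_univ s)]
          ring
        have he3 : ρ ^ ((1:ℂ)/2 + G.ν s) = ρ ^ (2 * τ ξ) * ρ ^ ((1:ℂ)/2 - G.ν s) := by
          rw [← Complex.cpow_add _ _ hρ]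
          congr 1
          rw [hνs]; ring
        rw [he1, he3]
        field_simp
        ring
      rw [core]
      ring
    have hprodO : ∀ s : Fin p, (fun ρ : ℂ => ∏ j ∈ Finset.univ.erase s,
        (G.σ j * (G.b1 j ρ / ρ ^ ((1:ℂ)/2 - G.ν j)))) =O[atInfUHP] (fun _ => (1:ℂ)) := by
      intro s
      apply hO1 _ (∏ j ∈ Finset.univ.erase s, (G.σ j * G.b1inf j))
      exact prod_sub_isBigO inv_isBigO_one _
        (fun j ρ => G.σ j * (G.b1 j ρ / ρ ^ ((1:ℂ)/2 - G.ν j)))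
        (fun j => G.σ j * G.b1inf j) (fun j _ => hfac (G.σ j) _ _ (hr1 j))
    have hAO : A =O[atInfUHP] (fun ρ : ℂ => ρ⁻¹) := by
      rw [hA]
      apply Asymptotics.IsBigO.fun_sum
      intro s hs
      have hps := prod_sub_isBigO inv_isBigO_one Finset.univ
        (fun j ρ => if j = s then G.σ2 s * (G.b2 s ρ / ρ ^ ((1:ℂ)/2 + G.ν s))
          else G.σ j * (G.b1 j ρ / ρ ^ ((1:ℂ)/2 - G.ν j)))
        (fun j => if j = s then G.σ2 s * G.b2inf s else G.σ j * G.b1inf j) ?_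
      · apply hps.congr_left
        intro ρ
        rw [← Finset.mul_prod_erase Finset.univ _ (Finset.mem_univ s),
          ← Finset.mul_prod_erase Finset.univ
            (fun j => if j = s then G.σ2 s * G.b2inf s else G.σ j * G.b1inf j)
            (Finset.mem_univ s)]
        rw [if_pos rfl, if_pos rfl]
        rw [Finset.prod_congr rfl (fun j hj => if_neg (Finset.ne_of_mem_erase hj)),
          Finset.prod_congr rfl (fun j hj =>
            if_neg (Finset.ne_of_mem_erase hj) :
            ∀ j ∈ Finset.univ.erase s, (if j = s then G.σ2 s * G.b2inf s
              else G.σ j * G.b1inf j) = G.σ j * G.b1inf j)]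
      · intro j _
        by_cases hj : j = s
        · subst hj
          simp only [if_pos rfl]
          exact hfac (G.σ2 j) _ _ (hr2 j)
        · simp only [if_neg hj]
          exact hfac (G.σ j) _ _ (hr1 j)
    have hBfO : Bf =O[atInfUHP] (fun _ => (1:ℂ)) := by
      rw [hBf]
      apply Asymptotics.IsBigO.fun_sum
      intro s _
      have h1 : (fun ρ : ℂ => G.σ1 s * (G.b1 s ρ / ρ ^ ((1:ℂ)/2 - G.ν s)))
          =O[atInfUHP] fun _ => (1:ℂ) := hO1 _ (G.σ1 s * G.b1inf s) (hfac _ _ _ (hr1 s))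
      simpa using h1.mul (hprodO s)
    have hcp : (fun ρ : ℂ => ρ ^ (-(2 * τ ξ))) =O[atInfUHP] fun ρ : ℂ => ρ⁻¹ := by
      apply cpow_isBigO_inv
      simp only [neg_re, Complex.mul_re, Complex.re_ofNat, Complex.im_ofNat]
      nlinarith [hτξ]
    have hsum : (fun ρ : ℂ => A ρ + ρ ^ (-(2 * τ ξ)) * Bf ρ) =O[atInfUHP]
        fun ρ : ℂ => ρ⁻¹ := by
      have h2 := hcp.mul hBfO
      refine hAO.add ?_ |>.congr_right (fun ρ => by ring)
      simpa using h2
    exact hsum.congr' heq.symm Filter.EventuallyEq.rfl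
  · -- the exact identity
    intro ρ hρ him
    have key : ∀ ξ : Fin m,
        ρ ^ (muSum G + 2 * τ ξ) * (aInfCoeff G I ξ +
          ((∑ s ∈ I ξ, (G.σ1 s * G.b1 s ρ + G.σ2 s * G.b2 s ρ) *
            ∏ j ∈ Finset.univ.erase s, (G.σ j * G.b1 j ρ)) / ρ ^ (muSum G + 2 * τ ξ)
            - aInfCoeff G I ξ))
        = ∑ s ∈ I ξ, (G.σ1 s * G.b1 s ρ + G.σ2 s * G.b2 s ρ) *
            ∏ j ∈ Finset.univ.erase s, (G.σ j * G.b1 j ρ) := by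
      intro ξ
      rw [show ∀ a b : ℂ, a + (b - a) = b from fun a b => by ring]
      exact mul_div_cancel₀ _ (hcne ρ hρ _)
    rw [Finset.sum_congr rfl (fun ξ _ => key ξ)]
    exact hpart _
  · -- the ρ → 0 limit
    have hev0 : ∀ᶠ ρ : ℂ in nhdsZeroUHP, ρ ≠ 0 := by
      have h := self_mem_nhdsWithin (a := (0:ℂ)) (s := {ρ : ℂ | 0 ≤ ρ.im ∧ ρ ≠ 0})
      exact Filter.eventually_iff_exists_mem.2 ⟨_, h, fun ρ hρ => hρ.2⟩
    have hid : ∀ ρ : ℂ, ρ ≠ 0 → G.Delta ρ / ρ ^ (muSum G)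
        = ∑ s : Fin p, (G.σ1 s * (G.b1 s ρ / ρ ^ ((1:ℂ)/2 - G.ν s))
            + G.σ2 s * (G.b2 s ρ / ρ ^ ((1:ℂ)/2 - G.ν s)))
          * ∏ j ∈ Finset.univ.erase s, (G.σ j * (G.b1 j ρ / ρ ^ ((1:ℂ)/2 - G.ν j))) := by
      intro ρ hρ
      rw [GraphProblem.Delta, Finset.sum_div]
      apply Finset.sum_congr rfl
      intro s _
      rw [hprod ρ hρ s]
      have h0 : ρ ^ muSum G = ρ ^ ((1:ℂ)/2 - G.ν s)
          * ρ ^ (∑ j ∈ Finset.univ.erase s, ((1:ℂ)/2 - G.ν j)) := by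
        rw [← Complex.cpow_add _ _ hρ]
        congr 1
        rw [muSum, ← Finset.add_sum_erase _ _ (Finset.mem_univ s)]
      rw [h0]
      have hps : ρ ^ ((1:ℂ)/2 - G.ν s) ≠ 0 := hcne ρ hρ _
      have hpq : ρ ^ (∑ j ∈ Finset.univ.erase s, ((1:ℂ)/2 - G.ν j)) ≠ 0 := hcne ρ hρ _
      field_simp
    have htend : Tendsto (fun ρ : ℂ =>
        ∑ s : Fin p, (G.σ1 s * (G.b1 s ρ / ρ ^ ((1:ℂ)/2 - G.ν s))
            + G.σ2 s * (G.b2 s ρ / ρ ^ ((1:ℂ)/2 - G.ν s)))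
          * ∏ j ∈ Finset.univ.erase s, (G.σ j * (G.b1 j ρ / ρ ^ ((1:ℂ)/2 - G.ν j))))
        nhdsZeroUHP (𝓝 G.d0) := by
      rw [GraphProblem.d0]
      apply tendsto_finset_sum
      intro s _
      exact (((G.hb10 s).const_mul (G.σ1 s)).add ((G.hb20 s).const_mul (G.σ2 s))).mul
        (tendsto_finset_prod _ fun j _ => (G.hb10 j).const_mul (G.σ j))
    apply htend.congr'
    filter_upwards [hev0] with ρ hρ
    exact (hid ρ hρ).symm
  · -- independence of the potentials
    intro G' h1 h2 h3 h4 hB' ξ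
    have e1 : ∀ j, G'.b1inf j = G.b1inf j := fun j => by
      rw [(hB' j).1, h1, (hB j).1]
    have e2 : ∀ j, G'.b2inf j = G.b2inf j := fun j => by
      rw [(hB' j).2, h1, (hB j).2]
    unfold aInfCoeff
    exact Finset.sum_congr rfl fun s _ => by
      rw [h4, e2]
      exact congrArg _ (Finset.prod_congr rfl fun j _ => by rw [h2, e1])
end
end

section
/- For every ρ for which the Weyl-type solutions exist, the local Weyl functions satisfy the identity (σ_{p1} + σ_{p2}m_p(λ))/σ_p = −Σ_{j=2}^{p−1} (σ_{j1} + σ_{j2}m_j(λ))/σ_j − U_{12}(ψ_{11}(·,ρ))/U_{11}(ψ_{11}(·,ρ)), where λ = ρ² and m_j(λ) = b_{j2}(ρ)/b_{j1}(ρ); in particular, the Weyl function m_p of the ray R_p is determined by q_2, …, q_{p−1}, the component ψ_{11} of the Weyl-type solution ψ_1, and the matching coefficients. -/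
open Filter Complex Topology MeasureTheory Asymptotics Matrix

noncomputable section

/-- the identity (5.2): for every `ρ` for which the Weyl-type solutions
exist, `(σ_{p1} + σ_{p2}m_p(λ))/σ_p = −Σ_{j=2}^{p−1}(σ_{j1} + σ_{j2}m_j(λ))/σ_j −
U_{12}(ψ_{11}(·,ρ))/U_{11}(ψ_{11}(·,ρ))`, where `λ = ρ²` and `m_j(λ) = b_{j2}(ρ)/b_{j1}(ρ)`
are the local Weyl functions; in particular the Weyl function `m_p` of the ray `R_p` is
determined by `q_2, …, q_{p−1}`, the component `ψ_{11}` of `ψ_1`, and the matching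
coefficients. Here ray `1` is indexed by `k1` and ray `p` by `kp`. -/
theorem stmt19 (p : ℕ) (hp : 2 ≤ p) (G : GraphProblem p) (W : WeylData G)
    (hG : G.CondG) (hR0 : G.CondR0) (hRinf : G.CondRinf)
    (k1 kp : Fin p) (hk1 : (k1 : ℕ) = 0) (hkp : (kp : ℕ) = p - 1)
    (ρ : ℂ) (hρ0 : ρ ≠ 0) (him : 0 ≤ ρ.im)
    (hne : G.b1 k1 ρ * G.Delta ρ ≠ 0)
    (hb1ne : ∀ j, G.b1 j ρ ≠ 0)
    (hβ : W.β k1 ρ ≠ 0)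
    (hγne : ∀ j : Fin p, j ≠ k1 → W.γ k1 j ρ ≠ 0)
    (hdiff : ∀ x : ℝ, 0 < x →
      DifferentiableAt ℝ (fun t : ℝ => G.f k1 t ρ) x ∧
      DifferentiableAt ℝ (fun t : ℝ => G.S2 k1 t (ρ ^ 2)) x) :
    ∀ x : ℝ, 0 < x →
      (G.σ1 kp + G.σ2 kp * (G.b2 kp ρ / G.b1 kp ρ)) / G.σ kp
        = - (∑ j ∈ Finset.univ.filter (fun j : Fin p => j ≠ k1 ∧ j ≠ kp),
              (G.σ1 j + G.σ2 j * (G.b2 j ρ / G.b1 j ρ)) / G.σ j)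
          - (G.σ1 k1 * Wr (fun t => W.ψ k1 k1 t ρ) (fun t => G.S2 k1 t (ρ ^ 2)) x
              + G.σ2 k1 * Wr (fun t => G.S1 k1 t (ρ ^ 2)) (fun t => W.ψ k1 k1 t ρ) x)
            / (G.σ k1 * Wr (fun t => W.ψ k1 k1 t ρ) (fun t => G.S2 k1 t (ρ ^ 2)) x) := by
  intro x hx
  classical
  have hk1p : k1 ≠ kp := by
    intro h
    have h0 : (k1 : ℕ) = (kp : ℕ) := by rw [h]
    rw [hk1, hkp] at h0
    omega
  -- γ_{1j} in terms of β
  have hγ : ∀ j, W.γ k1 j ρ = -W.β k1 ρ / (G.σ j * G.b1 j ρ) := by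
    intro j
    have h := W.hsys1 k1 j ρ hρ0 him hne
    have hd : G.σ j * G.b1 j ρ ≠ 0 := mul_ne_zero (G.hσ j) (hb1ne j)
    rw [eq_div_iff hd]
    linear_combination h
  -- sum identity from (3.4)
  have h2 := W.hsys2 k1 ρ hρ0 him hne
  have hsum : ∑ j, (G.σ1 j + G.σ2 j * (G.b2 j ρ / G.b1 j ρ)) / G.σ j
      = G.σ2 k1 * (2 * Complex.I * ρ / G.b1 k1 ρ) / W.β k1 ρ := by
    have key : ∀ j ∈ (Finset.univ : Finset (Fin p)),
        (G.σ1 j + G.σ2 j * (G.b2 j ρ / G.b1 j ρ)) / G.σ j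
          = ((G.σ1 j * G.b1 j ρ + G.σ2 j * G.b2 j ρ) * W.γ k1 j ρ) * (-1 / W.β k1 ρ) := by
      intro j _
      rw [hγ j]
      field_simp [G.hσ j, hb1ne j, hβ]
    rw [Finset.sum_congr rfl key, ← Finset.sum_mul, h2]
    ring
  -- split sum
  have hsplit : ∑ j, (G.σ1 j + G.σ2 j * (G.b2 j ρ / G.b1 j ρ)) / G.σ j
      = (∑ j ∈ Finset.univ.filter (fun j : Fin p => j ≠ k1 ∧ j ≠ kp),
          (G.σ1 j + G.σ2 j * (G.b2 j ρ / G.b1 j ρ)) / G.σ j)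
        + ((G.σ1 k1 + G.σ2 k1 * (G.b2 k1 ρ / G.b1 k1 ρ)) / G.σ k1
          + (G.σ1 kp + G.σ2 kp * (G.b2 kp ρ / G.b1 kp ρ)) / G.σ kp) := by
    rw [← Finset.sum_filter_add_sum_filter_not Finset.univ
      (fun j : Fin p => j ≠ k1 ∧ j ≠ kp)]
    congr 1
    have hfe : Finset.univ.filter (fun j : Fin p => ¬(j ≠ k1 ∧ j ≠ kp)) = {k1, kp} := by
      ext j
      simp [not_and_or, or_comm]
      tauto
    rw [hfe, Finset.sum_pair hk1p]
  -- differentiability and derivative facts at x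
  obtain ⟨hfd, hS2d⟩ := hdiff x hx
  have hS1d : DifferentiableAt ℝ (fun t => G.S1 k1 t (ρ ^ 2)) x := by
    have heq : (fun t => G.S1 k1 t (ρ ^ 2)) =ᶠ[nhds x]
        fun t => (G.f k1 t ρ - G.b2 k1 ρ * G.S2 k1 t (ρ ^ 2)) / G.b1 k1 ρ := by
      filter_upwards [isOpen_Ioi.mem_nhds hx] with t ht
      rw [G.hb k1 ρ hρ0 him t ht]
      field_simp [hb1ne k1]
      ring
    exact ((hfd.sub (hS2d.const_mul _)).div_const _).congr_of_eventuallyEq heq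
  have hev : (fun t => G.f k1 t ρ) =ᶠ[nhds x]
      fun t => G.b1 k1 ρ * G.S1 k1 t (ρ ^ 2) + G.b2 k1 ρ * G.S2 k1 t (ρ ^ 2) := by
    filter_upwards [isOpen_Ioi.mem_nhds hx] with t ht
    exact G.hb k1 ρ hρ0 him t ht
  have hderivf : deriv (fun t => G.f k1 t ρ) x
      = G.b1 k1 ρ * deriv (fun t => G.S1 k1 t (ρ ^ 2)) x
        + G.b2 k1 ρ * deriv (fun t => G.S2 k1 t (ρ ^ 2)) x := by
    rw [hev.deriv_eq, deriv_fun_add (hS1d.const_mul _) (hS2d.const_mul _),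
      deriv_const_mul _ hS1d, deriv_const_mul _ hS2d]
  have hψfun : (fun t => W.ψ k1 k1 t ρ)
      = fun t => W.γ k1 k1 ρ * G.f k1 t ρ
          + (2 * Complex.I * ρ / G.b1 k1 ρ) * G.S2 k1 t (ρ ^ 2) :=
    funext fun t => W.hψk k1 t ρ
  have hderivψ : deriv (fun t => W.ψ k1 k1 t ρ) x
      = W.γ k1 k1 ρ * deriv (fun t => G.f k1 t ρ) x
        + (2 * Complex.I * ρ / G.b1 k1 ρ) * deriv (fun t => G.S2 k1 t (ρ ^ 2)) x := by
    rw [hψfun, deriv_fun_add (hfd.const_mul _) (hS2d.const_mul _),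
      deriv_const_mul _ hfd, deriv_const_mul _ hS2d]
  have hW := G.hWrS k1 (ρ ^ 2) x hx
  unfold Wr at hW ⊢
  have hψx : W.ψ k1 k1 x ρ
      = W.γ k1 k1 ρ * G.f k1 x ρ
        + (2 * Complex.I * ρ / G.b1 k1 ρ) * G.S2 k1 x (ρ ^ 2) := W.hψk k1 x ρ
  have hfx : G.f k1 x ρ
      = G.b1 k1 ρ * G.S1 k1 x (ρ ^ 2) + G.b2 k1 ρ * G.S2 k1 x (ρ ^ 2) :=
    G.hb k1 ρ hρ0 him x hx
  have hWr1 : W.ψ k1 k1 x ρ * deriv (fun t => G.S2 k1 t (ρ ^ 2)) x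
      - deriv (fun t => W.ψ k1 k1 t ρ) x * G.S2 k1 x (ρ ^ 2)
      = W.γ k1 k1 ρ * G.b1 k1 ρ := by
    rw [hderivψ, hψx, hfx, hderivf]
    linear_combination W.γ k1 k1 ρ * G.b1 k1 ρ * hW
  have hWr2 : G.S1 k1 x (ρ ^ 2) * deriv (fun t => W.ψ k1 k1 t ρ) x
      - deriv (fun t => G.S1 k1 t (ρ ^ 2)) x * W.ψ k1 k1 x ρ
      = W.γ k1 k1 ρ * G.b2 k1 ρ + 2 * Complex.I * ρ / G.b1 k1 ρ := by
    rw [hderivψ, hψx, hfx, hderivf]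
    linear_combination (W.γ k1 k1 ρ * G.b2 k1 ρ + 2 * Complex.I * ρ / G.b1 k1 ρ) * hW
  rw [hWr1, hWr2]
  rw [hsplit] at hsum
  have hkey : (G.σ1 kp + G.σ2 kp * (G.b2 kp ρ / G.b1 kp ρ)) / G.σ kp
      = G.σ2 k1 * (2 * Complex.I * ρ / G.b1 k1 ρ) / W.β k1 ρ
        - (G.σ1 k1 + G.σ2 k1 * (G.b2 k1 ρ / G.b1 k1 ρ)) / G.σ k1
        - ∑ j ∈ Finset.univ.filter (fun j : Fin p => j ≠ k1 ∧ j ≠ kp),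
            (G.σ1 j + G.σ2 j * (G.b2 j ρ / G.b1 j ρ)) / G.σ j := by
    linear_combination hsum
  have hD : G.σ k1 * (W.γ k1 k1 ρ * G.b1 k1 ρ) = -W.β k1 ρ := by
    have h := W.hsys1 k1 k1 ρ hρ0 him hne
    linear_combination h
  have hN : G.σ1 k1 * (W.γ k1 k1 ρ * G.b1 k1 ρ)
      + G.σ2 k1 * (W.γ k1 k1 ρ * G.b2 k1 ρ + 2 * Complex.I * ρ / G.b1 k1 ρ)
      = -W.β k1 ρ * ((G.σ1 k1 + G.σ2 k1 * (G.b2 k1 ρ / G.b1 k1 ρ)) / G.σ k1)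
        + G.σ2 k1 * (2 * Complex.I * ρ / G.b1 k1 ρ) := by
    rw [hγ k1]
    field_simp [G.hσ k1, hb1ne k1]
    try ring
  rw [hN, hD, hkey]
  have hq : (-W.β k1 ρ * ((G.σ1 k1 + G.σ2 k1 * (G.b2 k1 ρ / G.b1 k1 ρ)) / G.σ k1)
      + G.σ2 k1 * (2 * Complex.I * ρ / G.b1 k1 ρ)) / (-W.β k1 ρ)
      = (G.σ1 k1 + G.σ2 k1 * (G.b2 k1 ρ / G.b1 k1 ρ)) / G.σ k1
        - G.σ2 k1 * (2 * Complex.I * ρ / G.b1 k1 ρ) / W.β k1 ρ := by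
    field_simp [hβ, G.hσ k1, hb1ne k1]
    try ring
  rw [hq]
  ring
end
end
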